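/- Let U ∈ ℝ^{N×L} satisfy U Uᵀ = Id_N, and for 1 ≤ k ≤ L−1 write U = (V_k W_k) with V_k ∈ ℝ^{N×k}, W_k ∈ ℝ^{N×(L−k)}. Assume V_k and W_k are of full rank. If k ≤ N and k ≤ L−k, then for every eigenvalue λ of the j-th compound matrix Λ^j(V_kᵀ (W_k W_kᵀ)^{-1} V_k) there is an eigenvalue μ of Λ^{k−j}(V_kᵀ (W_k W_kᵀ)^{-1} V_k) with λ·μ = det(V_kᵀ V_k) / det(W_k W_kᵀ). -/

import Mathlib

open Matrix

noncomputable def eigsDesc {n : ℕ} {A : Matrix (Fin n) (Fin n) ℝ} (hA : A.IsHermitian) : Fin n → ℝ :=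
  fun i => (hA.eigenvalues ∘ Tuple.sort hA.eigenvalues) i.rev

noncomputable def svDesc {m n : ℕ} (A : Matrix (Fin m) (Fin n) ℝ) : Fin n → ℝ :=
  fun i => Real.sqrt (eigsDesc (Matrix.isHermitian_conjTranspose_mul_self A) i)

noncomputable def slaterEntry {N L : ℕ} (U : Matrix (Fin N) (Fin L) ℝ) (o : Fin L → Bool) : ℝ :=
  if h : (Finset.univ.filter fun p => o p = true).card = N then
    (U.submatrix id ((Finset.univ.filter fun p => o p = true).orderEmbOfFin h)).det
  else 0

noncomputable def compound {k : ℕ} (j : ℕ) (A : Matrix (Fin k) (Fin k) ℝ) :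
    Matrix {s : Finset (Fin k) // s.card = j} {s : Finset (Fin k) // s.card = j} ℝ :=
  fun σ τ => (A.submatrix (σ.1.orderEmbOfFin σ.2) (τ.1.orderEmbOfFin τ.2)).det

def IsEigenvalue {ι : Type*} [Fintype ι] (M : Matrix ι ι ℝ) (lam : ℝ) : Prop :=
  ∃ v : ι → ℝ, v ≠ 0 ∧ M.mulVec v = lam • v

noncomputable def slaterReshape {N L : ℕ} (U : Matrix (Fin N) (Fin L) ℝ) (k : ℕ) :
    Matrix (Fin (2 ^ k)) (Fin (2 ^ (L - k))) ℝ :=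
  fun a b => slaterEntry U fun p =>
    if p.val < k then a.val.testBit p.val else b.val.testBit (p.val - k)

def leftBlock {N L : ℕ} (U : Matrix (Fin N) (Fin L) ℝ) (k : ℕ) (hk : k ≤ L) :
    Matrix (Fin N) (Fin k) ℝ :=
  U.submatrix id (fun i => Fin.castLE hk i)

def rightBlock {N L : ℕ} (U : Matrix (Fin N) (Fin L) ℝ) (k : ℕ) :
    Matrix (Fin N) (Fin (L - k)) ℝ :=
  U.submatrix id (fun i => ⟨k + i.val, by have := i.isLt; omega⟩)

def shiftEmb (k L : ℕ) : Fin (L - k) ↪ Fin L :=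
  ⟨fun i => ⟨k + i.val, by have := i.isLt; omega⟩, by
    intro a b h
    have : k + a.val = k + b.val := congrArg Fin.val h
    exact Fin.ext (by omega)⟩

noncomputable def Cmat {N L : ℕ} (k : ℕ) (hk : k ≤ L) (U : Matrix (Fin N) (Fin L) ℝ) (j : ℕ) :
    Matrix {s : Finset (Fin k) // s.card = j} {s : Finset (Fin (L - k)) // s.card = N - j} ℝ :=
  fun σ ρ => slaterEntry U fun p =>
    decide (p ∈ σ.1.map (Fin.castLEEmb hk) ∪ ρ.1.map (shiftEmb k L))

def blockSym {m n : ℕ} (A : Matrix (Fin m) (Fin n) ℝ) : Matrix (Fin (m + n)) (Fin (m + n)) ℝ :=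
  (Matrix.fromBlocks 0 A Aᵀ 0).submatrix finSumFinEquiv.symm finSumFinEquiv.symm


section Aux
open Finset


variable {j k : ℕ}

lemma det_mul_eq_sum_fun (A : Matrix (Fin j) (Fin k) ℝ) (B : Matrix (Fin k) (Fin j) ℝ) :
    (A * B).det = ∑ f : Fin j → Fin k, (∏ i, A i (f i)) * (B.submatrix f id).det := by
  have h : (A * B) = Matrix.of fun i => ∑ r : Fin k, A i r • B r := by
    ext i l; simp [Matrix.mul_apply, Finset.sum_apply]
  rw [h]
  have key := (Matrix.detRowAlternating (R := ℝ) (n := Fin j)).toMultilinearMap.map_sum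
    (g := fun (i : Fin j) (r : Fin k) => A i r • B r)
  simp only [AlternatingMap.coe_multilinearMap] at key
  have : Matrix.det (Matrix.of fun i => ∑ r : Fin k, A i r • B r : Matrix (Fin j) (Fin j) ℝ)
      = Matrix.detRowAlternating (fun i => ∑ r : Fin k, A i r • B r) := rfl
  rw [this, key]
  refine Finset.sum_congr rfl fun f _ => ?_
  have := (Matrix.detRowAlternating (R := ℝ) (n := Fin j)).toMultilinearMap.map_smul_univ
    (fun i => A i (f i)) (fun i => B (f i))
  simp only [AlternatingMap.coe_multilinearMap] at this
  rw [this]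
  rfl

lemma inj_decomp (f : Fin j → Fin k) (hf : Function.Injective f) :
    ∃ (R : Finset (Fin k)) (hR : R.card = j) (σ : Equiv.Perm (Fin j)),
      f = (R.orderEmbOfFin hR) ∘ σ := by
  refine ⟨Finset.univ.image f, by rw [Finset.card_image_of_injective _ hf, Finset.card_univ,
    Fintype.card_fin], ?_⟩
  set R := Finset.univ.image f with hRdef
  have hR : R.card = j := by rw [Finset.card_image_of_injective _ hf, Finset.card_univ,
    Fintype.card_fin]
  have hmem : ∀ i, f i ∈ R := fun i => Finset.mem_image_of_mem f (Finset.mem_univ i)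
  let e : Fin j → R := fun i => ⟨f i, hmem i⟩
  have hbij : Function.Bijective e := by
    rw [Fintype.bijective_iff_injective_and_card]
    constructor
    · intro a b hab
      exact hf (congrArg Subtype.val hab)
    · simp [hR]
  let eEquiv : Fin j ≃ R := Equiv.ofBijective e hbij
  let o : Fin j ≃o R := R.orderIsoOfFin hR
  refine ⟨eEquiv.trans o.symm.toEquiv, ?_⟩
  funext i
  simp only [Function.comp_apply, Equiv.trans_apply]
  have : (R.orderEmbOfFin hR) (o.symm.toEquiv (eEquiv i)) = ((o (o.symm (eEquiv i))) : Fin k) := rfl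
  rw [this, OrderIso.apply_symm_apply]
  rfl

lemma image_orderEmbOfFin (R : Finset (Fin k)) (hR : R.card = j) :
    Finset.univ.image (R.orderEmbOfFin hR) = R := by
  apply Finset.eq_of_subset_of_card_le
  · intro x hx
    obtain ⟨i, _, rfl⟩ := Finset.mem_image.1 hx
    exact Finset.orderEmbOfFin_mem R hR i
  · rw [Finset.card_image_of_injective _ (R.orderEmbOfFin hR).injective, hR,
      Finset.card_univ, Fintype.card_fin]

lemma cauchyBinet (A : Matrix (Fin j) (Fin k) ℝ) (B : Matrix (Fin k) (Fin j) ℝ) :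
    (A * B).det = ∑ R : {s : Finset (Fin k) // s.card = j},
      (A.submatrix id (R.1.orderEmbOfFin R.2)).det * (B.submatrix (R.1.orderEmbOfFin R.2) id).det := by
  classical
  rw [det_mul_eq_sum_fun]
  rw [← Finset.sum_filter_add_sum_filter_not Finset.univ (fun f => Function.Injective f)]
  have h2 : ∑ f ∈ Finset.univ.filter (fun f : Fin j → Fin k => ¬ Function.Injective f),
      (∏ i, A i (f i)) * (B.submatrix f id).det = 0 := by
    refine Finset.sum_eq_zero fun f hf => ?_
    have hninj : ¬ Function.Injective f := (Finset.mem_filter.1 hf).2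
    rw [Function.not_injective_iff] at hninj
    obtain ⟨a, b, hab, hne⟩ := hninj
    have : (B.submatrix f id).det = 0 := by
      apply Matrix.det_zero_of_row_eq hne
      funext c; simp [hab]
    rw [this, mul_zero]
  rw [h2, add_zero]
  have hmain : ∑ f ∈ Finset.univ.filter (fun f : Fin j → Fin k => Function.Injective f),
      (∏ i, A i (f i)) * (B.submatrix f id).det
      = ∑ p : {s : Finset (Fin k) // s.card = j} × Equiv.Perm (Fin j),
        (∏ i, A i (p.1.1.orderEmbOfFin p.1.2 (p.2 i))) *
          (B.submatrix ((p.1.1.orderEmbOfFin p.1.2) ∘ p.2) id).det := by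
    symm
    refine Finset.sum_bij (fun p _ => (p.1.1.orderEmbOfFin p.1.2) ∘ p.2) ?_ ?_ ?_ ?_
    · intro p _
      simp only [Finset.mem_filter, Finset.mem_univ, true_and]
      exact (p.1.1.orderEmbOfFin p.1.2).injective.comp p.2.injective
    · intro p _ q _ hpq
      have himg : ∀ (r : {s : Finset (Fin k) // s.card = j}) (σ : Equiv.Perm (Fin j)),
          Finset.univ.image ((r.1.orderEmbOfFin r.2) ∘ σ) = r.1 := by
        intro r σ
        rw [← Finset.image_image, Finset.image_univ_equiv, image_orderEmbOfFin]
      have hR : p.1 = q.1 := by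
        apply Subtype.ext
        rw [← himg p.1 p.2, ← himg q.1 q.2, hpq]
      have hRval : p.1.1 = q.1.1 := congrArg Subtype.val hR
      have hσ : p.2 = q.2 := by
        ext i
        have hfi := congrFun hpq i
        simp only [Function.comp_apply] at hfi
        rw [← hR] at hfi
        exact congrArg Fin.val ((p.1.1.orderEmbOfFin p.1.2).injective hfi)
      exact Prod.ext hR hσ
    · intro f hf
      obtain ⟨R, hR, σ, rfl⟩ := inj_decomp f (Finset.mem_filter.1 hf).2
      exact ⟨(⟨R, hR⟩, σ), Finset.mem_univ _, rfl⟩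
    · intro p _
      rfl
  rw [hmain, Fintype.sum_prod_type]
  refine Finset.sum_congr rfl fun R _ => ?_
  have hperm : ∀ σ : Equiv.Perm (Fin j),
      (B.submatrix ((R.1.orderEmbOfFin R.2) ∘ σ) id).det
        = (Equiv.Perm.sign σ : ℝ) * (B.submatrix (R.1.orderEmbOfFin R.2) id).det := by
    intro σ
    have : B.submatrix ((R.1.orderEmbOfFin R.2) ∘ σ) id
        = (B.submatrix (R.1.orderEmbOfFin R.2) id).submatrix σ id := rfl
    rw [this, Matrix.det_permute]
  calc ∑ σ : Equiv.Perm (Fin j), (∏ i, A i (R.1.orderEmbOfFin R.2 (σ i))) *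
        (B.submatrix ((R.1.orderEmbOfFin R.2) ∘ σ) id).det
      = ∑ σ : Equiv.Perm (Fin j), ((Equiv.Perm.sign σ : ℝ) * ∏ i, A i (R.1.orderEmbOfFin R.2 (σ i))) *
        (B.submatrix (R.1.orderEmbOfFin R.2) id).det := by
        refine Finset.sum_congr rfl fun σ _ => ?_
        rw [hperm σ]; ring
    _ = (A.submatrix id (R.1.orderEmbOfFin R.2)).det * (B.submatrix (R.1.orderEmbOfFin R.2) id).det := by
        rw [← Finset.sum_mul]
        congr 1
        rw [← Matrix.det_transpose (A.submatrix id (R.1.orderEmbOfFin R.2)), Matrix.det_apply]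
        refine Finset.sum_congr rfl fun σ _ => ?_
        simp [Matrix.transpose_apply, Matrix.submatrix_apply, Units.smul_def, zsmul_eq_mul]

lemma compound_mul (j : ℕ) (A B : Matrix (Fin k) (Fin k) ℝ) :
    compound j (A * B) = compound j A * compound j B := by
  ext σ τ
  have h : (A * B).submatrix (σ.1.orderEmbOfFin σ.2) (τ.1.orderEmbOfFin τ.2)
      = (A.submatrix (σ.1.orderEmbOfFin σ.2) id) * (B.submatrix id (τ.1.orderEmbOfFin τ.2)) := by
    ext a b; simp [Matrix.mul_apply]
  show ((A * B).submatrix _ _).det = _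
  rw [h, cauchyBinet]
  rw [Matrix.mul_apply]
  refine Finset.sum_congr rfl fun R _ => rfl

lemma compound_transpose (j : ℕ) (A : Matrix (Fin k) (Fin k) ℝ) :
    compound j Aᵀ = (compound j A)ᵀ := by
  ext σ τ
  show ((Aᵀ).submatrix _ _).det = ((A).submatrix _ _).det
  rw [← Matrix.transpose_submatrix, Matrix.det_transpose]

lemma compound_diagonal (j : ℕ) (d : Fin k → ℝ) :
    compound j (Matrix.diagonal d)
      = Matrix.diagonal (fun S : {s : Finset (Fin k) // s.card = j} => ∏ i ∈ S.1, d i) := by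
  ext σ τ
  by_cases h : σ = τ
  · subst h
    rw [Matrix.diagonal_apply_eq]
    show ((Matrix.diagonal d).submatrix _ _).det = _
    have he : (Matrix.diagonal d).submatrix (σ.1.orderEmbOfFin σ.2) (σ.1.orderEmbOfFin σ.2)
        = Matrix.diagonal (d ∘ (σ.1.orderEmbOfFin σ.2)) := by
      ext a b
      by_cases hab : a = b
      · subst hab; simp
      · rw [Matrix.submatrix_apply, Matrix.diagonal_apply_ne, Matrix.diagonal_apply_ne _ hab]
        exact fun hcon => hab ((σ.1.orderEmbOfFin σ.2).injective hcon)
    rw [he, Matrix.det_diagonal]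
    conv_rhs => rw [← image_orderEmbOfFin σ.1 σ.2]
    rw [Finset.prod_image (fun a _ b _ hab => (σ.1.orderEmbOfFin σ.2).injective hab)]
    rfl
  · rw [Matrix.diagonal_apply_ne _ h]
    have hnsub : ¬ σ.1 ⊆ τ.1 := fun hsub =>
      h (Subtype.ext (Finset.eq_of_subset_of_card_le hsub (by rw [σ.2, τ.2])))
    obtain ⟨s, hs1, hs2⟩ := Finset.not_subset.1 hnsub
    rw [← image_orderEmbOfFin σ.1 σ.2] at hs1
    obtain ⟨i, _, rfl⟩ := Finset.mem_image.1 hs1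
    apply Matrix.det_eq_zero_of_row_eq_zero i
    intro l
    rw [Matrix.submatrix_apply, Matrix.diagonal_apply_ne]
    exact fun hcon => hs2 (hcon ▸ Finset.orderEmbOfFin_mem τ.1 τ.2 l)

lemma compound_one (j : ℕ) : compound j (1 : Matrix (Fin k) (Fin k) ℝ) = 1 := by
  rw [← Matrix.diagonal_one, compound_diagonal]
  have : (fun S : {s : Finset (Fin k) // s.card = j} => ∏ i ∈ S.1, (1 : ℝ)) = fun _ => 1 := by
    funext S; simp
  rw [this, Matrix.diagonal_one]

lemma eigen_diagonal_exists {ι : Type*} [Fintype ι] [DecidableEq ι] (d : ι → ℝ) (lam : ℝ)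
    (h : IsEigenvalue (Matrix.diagonal d) lam) : ∃ i, lam = d i := by
  obtain ⟨v, hv, hev⟩ := h
  obtain ⟨i, hi⟩ := Function.ne_iff.1 hv
  refine ⟨i, ?_⟩
  have := congrFun hev i
  rw [Matrix.mulVec_diagonal] at this
  simp only [Pi.smul_apply, smul_eq_mul, Pi.zero_apply] at this hi
  have := mul_right_cancel₀ hi this.symm
  exact this

lemma eigen_diagonal_self {ι : Type*} [Fintype ι] [DecidableEq ι] (d : ι → ℝ) (i : ι) :
    IsEigenvalue (Matrix.diagonal d) (d i) := by
  refine ⟨Pi.single i 1, ?_, ?_⟩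
  · intro hcon
    have := congrFun hcon i
    simp at this
  · funext l
    rw [Matrix.mulVec_diagonal]
    by_cases hl : l = i
    · subst hl; simp
    · simp [Pi.single_eq_of_ne hl]

lemma eigen_conj {ι : Type*} [Fintype ι] [DecidableEq ι] (P D : Matrix ι ι ℝ)
    (h1 : P * Pᵀ = 1) (h2 : Pᵀ * P = 1) (lam : ℝ)
    (h : IsEigenvalue (P * D * Pᵀ) lam) : IsEigenvalue D lam := by
  obtain ⟨v, hv, hev⟩ := h
  refine ⟨Pᵀ.mulVec v, ?_, ?_⟩
  · intro hcon
    apply hv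
    have : P.mulVec (Pᵀ.mulVec v) = 0 := by rw [hcon, Matrix.mulVec_zero]
    rwa [Matrix.mulVec_mulVec, h1, Matrix.one_mulVec] at this
  · calc D.mulVec (Pᵀ.mulVec v) = (D * Pᵀ).mulVec v := by rw [Matrix.mulVec_mulVec]
      _ = ((Pᵀ * P) * (D * Pᵀ)).mulVec v := by rw [h2, Matrix.one_mul]
      _ = (Pᵀ * (P * D * Pᵀ)).mulVec v := by
          simp only [Matrix.mul_assoc]
      _ = Pᵀ.mulVec ((P * D * Pᵀ).mulVec v) := by rw [← Matrix.mulVec_mulVec]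
      _ = Pᵀ.mulVec (lam • v) := by rw [hev]
      _ = lam • Pᵀ.mulVec v := by rw [Matrix.mulVec_smul]

lemma compound_zero_of_pos {k : ℕ} {j : ℕ} (hj : 0 < j) :
    compound j (0 : Matrix (Fin k) (Fin k) ℝ) = 0 := by
  ext σ τ
  show ((0 : Matrix (Fin k) (Fin k) ℝ).submatrix _ _).det = 0
  apply Matrix.det_eq_zero_of_row_eq_zero ⟨0, hj⟩
  intro l
  rfl


end Aux

theorem compound_eigenvalue_pairing {N L k j : ℕ} (hjk : j ≤ k) (hkN : k ≤ N) (hkLk : k ≤ L - k)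
    (V : Matrix (Fin N) (Fin k) ℝ) (W : Matrix (Fin N) (Fin (L - k)) ℝ)
    (hVW : V * Vᵀ + W * Wᵀ = 1)
    (hV : V.rank = min N k) (hW : W.rank = min N (L - k)) :
    ∀ lam : ℝ, IsEigenvalue (compound j (Vᵀ * (W * Wᵀ)⁻¹ * V)) lam →
      ∃ mu : ℝ, IsEigenvalue (compound (k - j) (Vᵀ * (W * Wᵀ)⁻¹ * V)) mu ∧
        lam * mu = (Vᵀ * V).det / (W * Wᵀ).det := by
  intro lam hlam
  set G := W * Wᵀ with hGdef
  set M := Vᵀ * G⁻¹ * V with hMdef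
  by_cases hGi : IsUnit G.det
  · -- nondegenerate case
    -- M is symmetric
    have hGsym : Gᵀ = G := by rw [hGdef, Matrix.transpose_mul, Matrix.transpose_transpose]
    have hMsym : Mᵀ = M := by
      rw [hMdef, Matrix.transpose_mul, Matrix.transpose_mul, Matrix.transpose_transpose,
        Matrix.transpose_nonsing_inv, hGsym, Matrix.mul_assoc]
    have hMherm : M.IsHermitian := by
      show Mᴴ = M
      ext a b
      rw [Matrix.conjTranspose_apply]
      have h := congrFun (congrFun hMsym a) b
      rw [Matrix.transpose_apply] at h
      simpa using h
    set Q := (hMherm.eigenvectorUnitary : Matrix (Fin k) (Fin k) ℝ) with hQdef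
    set d := hMherm.eigenvalues with hddef
    have hstarQ : star Q = Qᵀ := by
      rw [Matrix.star_eq_conjTranspose, Matrix.conjTranspose, Matrix.transpose_map]
      ext a b; simp
    have hspec : M = Q * Matrix.diagonal d * Qᵀ := by
      have h0 := hMherm.spectral_theorem
      rw [Unitary.conjStarAlgAut_apply, ← hQdef, hstarQ] at h0
      have h1 : (RCLike.ofReal ∘ d : Fin k → ℝ) = d := by
        funext i
        simp only [Function.comp_apply]
        exact congrFun RCLike.ofReal_real_eq_id (d i)
      rw [h1] at h0
      exact h0
    have hQ1 : Q * Qᵀ = 1 := by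
      rw [← hstarQ]; exact (Matrix.mem_unitaryGroup_iff.mp hMherm.eigenvectorUnitary.2)
    have hQ2 : Qᵀ * Q = 1 := by
      rw [← hstarQ]; exact (Matrix.mem_unitaryGroup_iff'.mp hMherm.eigenvectorUnitary.2)
    -- compound decomposition, for arbitrary degree m
    have hcomp : ∀ m : ℕ, compound m M
        = compound m Q * compound m (Matrix.diagonal d) * (compound m Q)ᵀ := by
      intro m
      rw [hspec, compound_mul, compound_mul, compound_transpose]
    have hPP : ∀ m : ℕ, compound m Q * (compound m Q)ᵀ = 1 := by
      intro m
      rw [← compound_transpose, ← compound_mul, hQ1, compound_one]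
    have hPP' : ∀ m : ℕ, (compound m Q)ᵀ * compound m Q = 1 := by
      intro m
      rw [← compound_transpose, ← compound_mul, hQ2, compound_one]
    -- extract lam
    have hlamD : IsEigenvalue (compound j (Matrix.diagonal d)) lam := by
      apply eigen_conj (compound j Q) _ (hPP j) (hPP' j)
      rw [← hcomp j]; exact hlam
    rw [compound_diagonal] at hlamD
    obtain ⟨S, hlamS⟩ := eigen_diagonal_exists _ _ hlamD
    -- complementary subset
    set T : Finset (Fin k) := S.1ᶜ with hTdef
    have hTcard : T.card = k - j := by
      rw [hTdef, Finset.card_compl, S.2, Fintype.card_fin]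
    set mu := ∏ i ∈ T, d i with hmudef
    refine ⟨mu, ?_, ?_⟩
    · -- mu is an eigenvalue of compound (k-j) M
      have hmuD : IsEigenvalue (compound (k - j) (Matrix.diagonal d)) mu := by
        rw [compound_diagonal]
        exact eigen_diagonal_self
          (fun S' : {s : Finset (Fin k) // s.card = k - j} => ∏ i ∈ S'.1, d i) ⟨T, hTcard⟩
      apply eigen_conj (compound (k - j) Q)ᵀ
      · rw [Matrix.transpose_transpose]; exact hPP' _
      · rw [Matrix.transpose_transpose]; exact hPP _
      · rw [Matrix.transpose_transpose]
        have : (compound (k-j) Q)ᵀ * compound (k-j) M * compound (k-j) Q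
            = compound (k - j) (Matrix.diagonal d) := by
          rw [hcomp (k-j)]
          calc (compound (k-j) Q)ᵀ * (compound (k-j) Q * compound (k-j) (Matrix.diagonal d)
                * (compound (k-j) Q)ᵀ) * compound (k-j) Q
              = ((compound (k-j) Q)ᵀ * compound (k-j) Q) * compound (k-j) (Matrix.diagonal d)
                * ((compound (k-j) Q)ᵀ * compound (k-j) Q) := by
                simp only [Matrix.mul_assoc]
            _ = compound (k - j) (Matrix.diagonal d) := by
                rw [hPP' (k-j), Matrix.one_mul, Matrix.mul_one]
        rw [this]; exact hmuD
    · -- the product identity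
      have hdetM : M.det = ∏ i, d i := by
        have := hMherm.det_eq_prod_eigenvalues
        simpa using this
      have hlm : lam * mu = M.det := by
        rw [hlamS, hmudef, hdetM, hTdef]
        exact Finset.prod_mul_prod_compl S.1 d
      rw [hlm]
      -- det M = det (Vᵀ V) / det G
      set F := (1 : Matrix (Fin k) (Fin k) ℝ) - Vᵀ * V with hFdef
      have hGW : G = 1 - V * Vᵀ := by
        rw [hGdef, ← hVW]; abel
      have hFG : F.det = G.det := by
        rw [hFdef, hGW, Matrix.det_one_sub_mul_comm]
      have hFunit : IsUnit F.det := by rw [hFG]; exact hGi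
      have hVF : V * F = G * V := by
        rw [hFdef, hGW, Matrix.mul_sub, Matrix.sub_mul, Matrix.mul_one, Matrix.one_mul,
          Matrix.mul_assoc]
      have hGV : G⁻¹ * V = V * F⁻¹ := by
        have h1 : G⁻¹ * (V * F) * F⁻¹ = G⁻¹ * (G * V) * F⁻¹ := by rw [hVF]
        have h2 : G⁻¹ * (V * F) * F⁻¹ = G⁻¹ * V := by
          rw [Matrix.mul_assoc, Matrix.mul_assoc, Matrix.mul_nonsing_inv F hFunit,
            Matrix.mul_one]
        have h3 : G⁻¹ * (G * V) * F⁻¹ = V * F⁻¹ := by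
          rw [← Matrix.mul_assoc, Matrix.nonsing_inv_mul G hGi, Matrix.one_mul]
        rw [← h2, h1, h3]
      have hMF : M = (Vᵀ * V) * F⁻¹ := by
        rw [hMdef, Matrix.mul_assoc, hGV, ← Matrix.mul_assoc]
      rw [hMF, Matrix.det_mul, Matrix.det_nonsing_inv, Ring.inverse_eq_inv, hFG,
        div_eq_mul_inv]
  · -- degenerate case : G is not invertible
    have hGinv : G⁻¹ = 0 := Matrix.nonsing_inv_apply_not_isUnit G hGi
    have hM0 : M = 0 := by rw [hMdef, hGinv, Matrix.mul_zero, Matrix.zero_mul]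
    have hGdet : G.det = 0 := by
      by_contra h
      exact hGi (isUnit_iff_ne_zero.mpr h)
    have hk0 : 0 < k := by
      rcases Nat.eq_zero_or_pos k with hk | hk
      · exfalso
        apply hGi
        subst hk
        have : V * Vᵀ = 0 := by
          ext a b; simp [Matrix.mul_apply]
        rw [this, zero_add] at hVW
        rw [hVW, Matrix.det_one]
        exact isUnit_one
      · exact hk
    rcases Nat.lt_or_ge j k with hjlt | hjge
    · -- j < k : mu = 0 works
      refine ⟨0, ?_, ?_⟩
      · rw [hM0, compound_zero_of_pos (by omega)]
        obtain ⟨T, _, hT⟩ := Finset.exists_subset_card_eq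
          (show k - j ≤ (Finset.univ : Finset (Fin k)).card by
            rw [Finset.card_univ, Fintype.card_fin]; omega)
        refine ⟨Pi.single ⟨T, hT⟩ 1, ?_, ?_⟩
        · intro hcon
          have := congrFun hcon ⟨T, hT⟩
          simp at this
        · rw [Matrix.zero_mulVec, zero_smul]
      · rw [hGdet, div_zero, mul_zero]
    · -- j = k : lam = 0, mu = 1
      have hjeq : j = k := le_antisymm hjk hjge
      have hlam0 : lam = 0 := by
        obtain ⟨v, hv, hev⟩ := hlam
        rw [hM0, compound_zero_of_pos (by omega), Matrix.zero_mulVec] at hev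
        obtain ⟨i, hi⟩ := Function.ne_iff.1 hv
        have := congrFun hev.symm i
        simp only [Pi.smul_apply, smul_eq_mul, Pi.zero_apply] at this
        rcases mul_eq_zero.1 this with h | h
        · exact h
        · exact absurd h hi
      refine ⟨1, ?_, ?_⟩
      · have hzero : k - j = 0 := by omega
        rw [hzero]
        have hcompid : compound 0 M = 1 := by
          ext σ τ
          have hστ : σ = τ := by
            apply Subtype.ext
            rw [Finset.card_eq_zero.1 σ.2, Finset.card_eq_zero.1 τ.2]
          subst hστ
          rw [Matrix.one_apply_eq]
          exact Matrix.det_isEmpty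
        rw [hcompid]
        refine ⟨fun _ => 1, ?_, ?_⟩
        · intro hcon
          have := congrFun hcon ⟨∅, Finset.card_empty⟩
          simp at this
        · rw [Matrix.one_mulVec, one_smul]
      · rw [hlam0, hGdet, div_zero, zero_mul]
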